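/- Let h : [0,1] → [0,1] be three times continuously differentiable at p₀ ∈ (0,1) with h'(p₀) > 0, and for small ε > 0 let λ(ε) be the unique solution of h(p₀-ε) - 2·h(p₀-λ) + h(p₀+ε) = 0 near 0. Then λ(ε) = -(ε²/2) · h''(p₀)/h'(p₀) + o(ε²) as ε → 0⁺. -/

import Mathlib

open Set Filter Asymptotics

lemma taylor2 (f : ℝ → ℝ) (x : ℝ) (hf : ContDiffAt ℝ 2 f x) :
    (fun t : ℝ => f (x + t) - f x - t * deriv f x - t ^ 2 / 2 * deriv (deriv f) x)
      =o[nhds (0:ℝ)] fun t => t ^ 2 := by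
  obtain ⟨u, hu, hfu⟩ := hf.contDiffOn le_rfl (by simp)
  obtain ⟨v, hvu, hv, hxv⟩ := mem_nhds_iff.1 hu
  have hfv : ContDiffOn ℝ 2 f v := hfu.mono hvu
  have hdv : ContDiffOn ℝ 1 (deriv f) v := hfv.deriv_of_isOpen hv (by norm_num)
  have hD2 : HasDerivAt (deriv f) (deriv (deriv f) x) x :=
    ((hdv.differentiableOn (by norm_num)).differentiableAt (hv.mem_nhds hxv)).hasDerivAt
  have hD1 : ∀ y ∈ v, HasDerivAt f (deriv f y) y := fun y hy =>
    ((hfv.differentiableOn (by norm_num)).differentiableAt (hv.mem_nhds hy)).hasDerivAt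
  set A := deriv f x
  set B := deriv (deriv f) x
  rw [isLittleO_iff]
  intro c hc
  -- little-o of the derivative
  have hr : (fun s : ℝ => deriv f (x + s) - A - s * B) =o[nhds (0:ℝ)] fun s => s := by
    have htend : Tendsto (fun s : ℝ => x + s) (nhds 0) (nhds x) := by
      simpa using (tendsto_id : Tendsto (fun s : ℝ => s) (nhds 0) (nhds 0)).const_add x
    have := (hasDerivAt_iff_isLittleO.1 hD2).comp_tendsto htend
    simpa [Function.comp_def, add_sub_cancel_left, smul_eq_mul, mul_comm] using this
  have hr' : ∀ᶠ s : ℝ in nhds 0, |deriv f (x + s) - A - s * B| ≤ c * |s| := by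
    simpa [Real.norm_eq_abs] using (isLittleO_iff.1 hr) hc
  have hv' : ∀ᶠ s : ℝ in nhds 0, x + s ∈ v := by
    have htend : Tendsto (fun s : ℝ => x + s) (nhds 0) (nhds x) := by
      simpa using (tendsto_id : Tendsto (fun s : ℝ => s) (nhds 0) (nhds 0)).const_add x
    exact htend.eventually (hv.eventually_mem hxv)
  obtain ⟨τ, hτ, hτ'⟩ := Metric.eventually_nhds_iff.1 (hr'.and hv')
  rw [Metric.eventually_nhds_iff]
  refine ⟨τ, hτ, fun t ht => ?_⟩
  simp only [dist_zero_right, Real.norm_eq_abs] at ht ⊢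
  set g : ℝ → ℝ := fun z => f (x + z) - z * A - z ^ 2 / 2 * B with hg
  set g' : ℝ → ℝ := fun z => deriv f (x + z) - A - z * B with hg'
  have key : ∀ z ∈ Icc (-|t|) |t|, |z| ≤ |t| := fun z hz => abs_le.2 ⟨hz.1, hz.2⟩
  have hder : ∀ z ∈ Icc (-|t|) |t|, HasDerivWithinAt g (g' z) (Icc (-|t|) |t|) z := by
    intro z hz
    have hzv : x + z ∈ v := by
      have := hτ' (y := z) (by simpa [dist_zero_right] using lt_of_le_of_lt (key z hz) ht)
      exact this.2
    have h1 : HasDerivAt (fun z : ℝ => f (x + z)) (deriv f (x + z)) z := by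
      have := (hD1 _ hzv).comp z ((hasDerivAt_id z).const_add x)
      rw [mul_one] at this
      exact this
    have : HasDerivAt g (deriv f (x + z) - A - z * B) z := by
      have h2 : HasDerivAt (fun z : ℝ => z * A) A z := by
        simpa using (hasDerivAt_id z).mul_const A
      have h3 : HasDerivAt (fun z : ℝ => z ^ 2 / 2 * B) (z * B) z := by
        have := ((hasDerivAt_pow 2 z).div_const 2).mul_const B
        refine this.congr_deriv ?_
        ring
      exact (h1.sub h2).sub h3
    exact this.hasDerivWithinAt
  have hbound : ∀ z ∈ Icc (-|t|) |t|, ‖g' z‖ ≤ c * |t| := by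
    intro z hz
    have := (hτ' (y := z) (by simpa [dist_zero_right] using lt_of_le_of_lt (key z hz) ht)).1
    calc ‖g' z‖ ≤ c * |z| := by simpa [Real.norm_eq_abs, hg'] using this
    _ ≤ c * |t| := by nlinarith [key z hz, abs_nonneg z]
  have h0 : (0:ℝ) ∈ Icc (-|t|) |t| := by constructor <;> simp [abs_nonneg]
  have htmem : t ∈ Icc (-|t|) |t| := by constructor <;> [linarith [neg_abs_le t]; exact le_abs_self t]
  have := (convex_Icc _ _).norm_image_sub_le_of_norm_hasDerivWithin_le hder hbound h0 htmem
  have hgeq : g t - g 0 = f (x + t) - f x - t * A - t ^ 2 / 2 * B := by simp [hg]; ring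
  rw [hgeq] at this
  calc |f (x + t) - f x - t * A - t ^ 2 / 2 * B| ≤ c * |t| * ‖t - 0‖ := this
  _ = c * |t ^ 2| := by rw [sub_zero, Real.norm_eq_abs, pow_two, abs_mul]; ring

theorem dt_probability_premium_local
    (h : ℝ → ℝ) (p₀ : ℝ) (hp : p₀ ∈ Ioo (0:ℝ) 1)
    (hmap : ∀ p ∈ Icc (0:ℝ) 1, h p ∈ Icc (0:ℝ) 1)
    (hC : ContDiffAt ℝ 3 h p₀)
    (hd : 0 < deriv h p₀)
    (lam : ℝ → ℝ)
    (hlam : ∀ᶠ ε in nhdsWithin 0 (Ioi 0),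
      h (p₀ - ε) - 2 * h (p₀ - lam ε) + h (p₀ + ε) = 0)
    (hlam0 : Filter.Tendsto lam (nhdsWithin 0 (Ioi 0)) (nhds 0)) :
    (fun ε : ℝ => lam ε + ε ^ 2 / 2 * (deriv (deriv h) p₀ / deriv h p₀))
      =o[nhdsWithin 0 (Ioi 0)] (fun ε : ℝ => ε ^ 2) := by
  set l := nhdsWithin (0:ℝ) (Ioi 0) with hl
  set A := deriv h p₀ with hA
  set B := deriv (deriv h) p₀ with hB
  have hA0 : A ≠ 0 := ne_of_gt hd
  have T := taylor2 h p₀ (hC.of_le (by norm_num))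
  have hle : l ≤ nhds (0:ℝ) := nhdsWithin_le_nhds
  -- R₁
  set R₁ : ℝ → ℝ := fun ε => h (p₀ + ε) - h p₀ - ε * A - ε ^ 2 / 2 * B with hR₁
  have r₁ : R₁ =o[l] fun ε => ε ^ 2 := T.mono hle
  -- R₂
  set R₂ : ℝ → ℝ := fun ε => h (p₀ + -ε) - h p₀ - (-ε) * A - (-ε) ^ 2 / 2 * B with hR₂
  have r₂ : R₂ =o[l] fun ε => ε ^ 2 := by
    have hneg : Tendsto (fun ε : ℝ => -ε) l (nhds 0) := by
      simpa using ((tendsto_id : Tendsto (fun ε : ℝ => ε) (nhds 0) (nhds 0)).neg).mono_left hle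
    have := T.comp_tendsto hneg
    simpa [Function.comp_def, neg_sq] using this
  -- R₃
  set R₃ : ℝ → ℝ := fun ε => h (p₀ + -lam ε) - h p₀ - (-lam ε) * A - (-lam ε) ^ 2 / 2 * B with hR₃
  have r₃ : R₃ =o[l] fun ε => lam ε ^ 2 := by
    have hneg : Tendsto (fun ε => -lam ε) l (nhds 0) := by simpa using hlam0.neg
    have := T.comp_tendsto hneg
    simpa [Function.comp_def, neg_sq] using this
  -- lam = o(1)
  have hlamo : lam =o[l] (fun _ => (1:ℝ)) := (isLittleO_one_iff ℝ).2 hlam0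
  -- lam² = o(lam)
  have hsq : (fun ε => lam ε ^ 2) =o[l] lam := by
    have := hlamo.mul_isBigO (isBigO_refl lam l)
    simpa [pow_two] using this
  -- the key eventual identity from the equation
  have hev : ∀ᶠ ε in l, 2 * A * lam ε - (lam ε ^ 2 * B + 2 * R₃ ε)
      = -(ε ^ 2 * B + R₁ ε + R₂ ε) := by
    filter_upwards [hlam] with ε heq
    have e1 : p₀ + -ε = p₀ - ε := by ring
    have e2 : p₀ + -lam ε = p₀ - lam ε := by ring
    simp only [hR₁, hR₂, hR₃, e1, e2]
    linarith [heq]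
  -- E := lhs is O(ε²)
  have hE : (fun ε => 2 * A * lam ε - (lam ε ^ 2 * B + 2 * R₃ ε)) =O[l] fun ε => ε ^ 2 := by
    refine IsBigO.congr' ?_ (hev.mono fun ε he => he.symm) EventuallyEq.rfl
    have h1 : (fun ε : ℝ => ε ^ 2 * B) =O[l] fun ε => ε ^ 2 := by
      simpa [mul_comm] using (isBigO_refl (fun ε : ℝ => ε ^ 2) l).const_mul_left B
    exact ((h1.add r₁.isBigO).add r₂.isBigO).neg_left
  -- small part is o(lam)
  have hsmall : (fun ε => lam ε ^ 2 * B + 2 * R₃ ε) =o[l] lam := by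
    have h1 : (fun ε => lam ε ^ 2 * B) =o[l] lam := by
      simpa [mul_comm] using hsq.const_mul_left B
    have h2 : (fun ε => 2 * R₃ ε) =o[l] lam := ((r₃.trans_isBigO hsq.isBigO).const_mul_left 2)
    exact h1.add h2
  -- lam = O(E)
  have hlamE : lam =O[l] (fun ε => 2 * A * lam ε - (lam ε ^ 2 * B + 2 * R₃ ε)) := by
    rw [isBigO_iff]
    refine ⟨1 / A, ?_⟩
    filter_upwards [isLittleO_iff.1 hsmall hd] with ε hs
    rw [Real.norm_eq_abs, Real.norm_eq_abs] at *
    have habs : A * |lam ε| ≤ |2 * A * lam ε - (lam ε ^ 2 * B + 2 * R₃ ε)| := by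
      have h2 : |2 * A * lam ε| = 2 * A * |lam ε| := by
        rw [abs_mul, abs_of_pos (by positivity : (0:ℝ) < 2 * A)]
      calc A * |lam ε| = 2 * A * |lam ε| - A * |lam ε| := by ring
        _ ≤ |2 * A * lam ε| - |lam ε ^ 2 * B + 2 * R₃ ε| := by rw [h2]; linarith
        _ ≤ _ := by
          have := abs_sub_abs_le_abs_sub (2 * A * lam ε) (lam ε ^ 2 * B + 2 * R₃ ε)
          linarith
    rw [div_mul_eq_mul_div, le_div_iff₀ hd, one_mul, mul_comm]
    exact habs
  have hbig : lam =O[l] fun ε => ε ^ 2 := hlamE.trans hE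
  -- lam² = o(ε²)
  have hsq2 : (fun ε => lam ε ^ 2) =o[l] fun ε => ε ^ 2 := by
    have := hlamo.mul_isBigO hbig
    simpa [pow_two] using this
  -- final expression
  have hfin : (fun ε => (-R₁ ε - R₂ ε + lam ε ^ 2 * B + 2 * R₃ ε) * (1 / (2 * A)))
      =o[l] fun ε => ε ^ 2 := by
    have h1 : (fun ε => lam ε ^ 2 * B) =o[l] (fun ε : ℝ => ε ^ 2) := by
      simpa [mul_comm] using hsq2.const_mul_left B
    have h3 : (fun ε => 2 * R₃ ε) =o[l] (fun ε : ℝ => ε ^ 2) := (r₃.trans_isBigO hsq2.isBigO).const_mul_left 2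
    have := (((r₁.neg_left.sub r₂).add h1).add h3).const_mul_left (1/(2*A))
    simpa [mul_comm] using this
  refine hfin.congr' ?_ EventuallyEq.rfl
  filter_upwards [hev] with ε heq
  field_simp
  linear_combination -heq
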